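/- Let n ≥ 1 and let K ⊂ ℝⁿ be a convex body. Then there exists a constant C = C(K) > 0 such that for every convex body P ⊆ K and every integer k ≥ 1, one has #(P ∩ ℤⁿ/k) ≤ |P|·kⁿ + C·k^{n−1}. -/

import Mathlib

open MeasureTheory Set
open scoped Pointwise ENNReal

/-- The rescaled lattice `ℤⁿ/k` inside `ℝⁿ`. -/
def lpts (n k : ℕ) : Set (EuclideanSpace ℝ (Fin n)) :=
  {x | ∀ i, ∃ m : ℤ, (k : ℝ) * x i = (m : ℝ)}

namespace Stmt2Aux

/-- one-direction segment -/
def seg (n : ℕ) (j : Fin n) (ε : ℝ) : Set (Fin n → ℝ) :=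
  univ.pi fun i => if i = j then Icc 0 ε else {(0:ℝ)}

/-- multi-direction cube piece -/
def qset (n : ℕ) (s : Finset (Fin n)) (ε : ℝ) : Set (Fin n → ℝ) :=
  univ.pi fun i => if i ∈ s then Icc 0 ε else {(0:ℝ)}

lemma seg_convex (n j ε) : Convex ℝ (seg n j ε) := by
  apply convex_pi; intro i _
  split
  · exact convex_Icc _ _
  · exact convex_singleton _

lemma seg_compact (n j ε) : IsCompact (seg n j ε) := by
  apply isCompact_univ_pi; intro i
  split
  · exact isCompact_Icc
  · exact isCompact_singleton

lemma qset_convex (n s ε) : Convex ℝ (qset n s ε) := by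
  apply convex_pi; intro i _
  split
  · exact convex_Icc _ _
  · exact convex_singleton _

lemma qset_compact (n s ε) : IsCompact (qset n s ε) := by
  apply isCompact_univ_pi; intro i
  split
  · exact isCompact_Icc
  · exact isCompact_singleton

lemma insertNth_add_single {m : ℕ} (j : Fin (m+1)) (t s : ℝ) (ω : Fin m → ℝ) :
    j.insertNth t ω + (fun i => if i = j then s else 0) = j.insertNth (t+s) ω := by
  classical
  funext i
  refine Fin.succAboveCases j ?_ ?_ i
  · simp
  · intro i'
    simp [Fin.succAbove_ne j i', Pi.add_apply]

lemma step (m : ℕ) (j : Fin (m+1)) (ε B : ℝ) (hε : 0 ≤ ε)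
    (A : Set (Fin (m+1) → ℝ)) (hA : Convex ℝ A) (hAc : IsCompact A)
    (hAB : A ⊆ univ.pi fun _ => Icc (-B) B) :
    volume (A + seg (m+1) j ε)
      ≤ volume A + ENNReal.ofReal ε * ENNReal.ofReal (2*B) ^ m := by
  classical
  set A' := A + seg (m+1) j ε with hA'def
  have hA'c : IsCompact A' := hAc.add (seg_compact _ _ _)
  have hAm : MeasurableSet A := hAc.measurableSet
  have hA'm : MeasurableSet A' := hA'c.measurableSet
  set e := MeasurableEquiv.piFinSuccAbove (fun _ : Fin (m+1) => ℝ) j with he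
  have MP := measurePreserving_piFinSuccAbove (fun _ : Fin (m+1) => (volume : Measure ℝ)) j
  have key : ∀ S : Set (Fin (m+1) → ℝ), MeasurableSet S →
      volume S = ∫⁻ ω : Fin m → ℝ, volume {t : ℝ | j.insertNth t ω ∈ S} := by
    intro S hS
    have h1 : volume S = ((volume : Measure ℝ).prod
        (Measure.pi fun _ : Fin m => (volume : Measure ℝ))) (e '' S) := by
      rw [← MP.map_eq, MeasurableEquiv.map_apply]
      congr 1
      exact (Equiv.preimage_image e.toEquiv S).symm
    rw [h1, Measure.prod_apply_symm (e.measurableSet_image.2 hS)]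
    have : ∀ ω : Fin m → ℝ, ((fun t : ℝ => (t, ω)) ⁻¹' (e '' S))
        = {t : ℝ | j.insertNth t ω ∈ S} := by
      intro ω
      ext t
      simp only [mem_preimage, Set.mem_image, mem_setOf_eq]
      constructor
      · rintro ⟨x, hx, hex⟩
        have : x = e.symm (t, ω) := by rw [← hex]; simp
        rw [this] at hx
        simpa [e, MeasurableEquiv.piFinSuccAbove, Fin.insertNthEquiv] using hx
      · intro h
        refine ⟨j.insertNth t ω, h, ?_⟩
        simp [e, MeasurableEquiv.piFinSuccAbove, Fin.insertNthEquiv]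
    simp_rw [this]
    rw [volume_pi]
  set boxm : Set (Fin m → ℝ) := univ.pi fun _ => Icc (-B) B with hboxm
  have hfib : ∀ ω : Fin m → ℝ, volume {t : ℝ | j.insertNth t ω ∈ A'}
      ≤ volume {t : ℝ | j.insertNth t ω ∈ A}
        + boxm.indicator (fun _ => ENNReal.ofReal ε) ω := by
    intro ω
    set F : Set ℝ := {t : ℝ | j.insertNth t ω ∈ A} with hF
    have hclaim : {t : ℝ | j.insertNth t ω ∈ A'} = F + Icc 0 ε := by
      ext t
      simp only [mem_setOf_eq, hA'def, Set.mem_add]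
      constructor
      · rintro ⟨a, ha, c, hc, hac⟩
        have hcj : c j ∈ Icc (0:ℝ) ε := by
          have := hc j (mem_univ j); simpa using this
        have hc0 : c = fun i => if i = j then c j else 0 := by
          funext i
          by_cases hij : i = j
          · simp [hij]
          · have := hc i (mem_univ i)
            simp only [if_neg hij] at this
            simp [hij]
            simpa using this
        have : a = j.insertNth (t - c j) ω := by
          have h2 : j.insertNth (t - c j) ω + c = a + c := by
            rw [hac]
            have h3 := insertNth_add_single j (t - c j) (c j) ω
            rw [sub_add_cancel] at h3
            rw [← h3]
            congr 1
          exact (add_right_cancel h2).symm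
        exact ⟨t - c j, by rw [hF, mem_setOf_eq, ← this]; exact ha, c j, hcj, by ring⟩
      · rintro ⟨t₀, ht₀, s, hs, hts⟩
        refine ⟨j.insertNth t₀ ω, ht₀, fun i => if i = j then s else 0, ?_, ?_⟩
        · intro i _
          by_cases hij : i = j
          · simpa [hij] using hs
          · simp [hij]
        · rw [insertNth_add_single, hts]
    rw [hclaim]
    rcases eq_empty_or_nonempty F with hFe | hFne
    · simp [hFe]
    · have hFc : Convex ℝ F := by
        intro t₁ h₁ t₂ h₂ a b ha hb hab
        have h3 : j.insertNth (a * t₁ + b * t₂) ω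
            = a • (j.insertNth t₁ ω : Fin (m+1) → ℝ)
              + b • (j.insertNth t₂ ω : Fin (m+1) → ℝ) := by
          funext i
          refine Fin.succAboveCases j ?_ ?_ i
          · simp
          · intro i'
            simp only [Pi.add_apply, Pi.smul_apply, Fin.insertNth_apply_succAbove,
              smul_eq_mul]
            rw [← add_mul, hab, one_mul]
        have h4 := hA h₁ h₂ ha hb hab
        show j.insertNth (a • t₁ + b • t₂) ω ∈ A
        rw [smul_eq_mul, smul_eq_mul, h3]
        exact h4
      have hFcl : IsClosed F :=
        hAc.isClosed.preimage (continuous_id.finInsertNth j continuous_const)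
      have hFsub : F ⊆ Icc (-B) B := by
        intro t ht
        have := hAB ht j (mem_univ j)
        simpa using this
      have hFcomp : IsCompact F := isCompact_Icc.of_isClosed_subset hFcl hFsub
      have hFeq : F = Icc (sInf F) (sSup F) :=
        eq_Icc_of_connected_compact ⟨hFne, hFc.isPreconnected⟩ hFcomp
      have hinf_le : sInf F ≤ sSup F :=
        csInf_le_csSup hFne hFcomp.bddBelow hFcomp.bddAbove
      have hωbox : ω ∈ boxm := by
        obtain ⟨t₀, ht₀⟩ := hFne
        intro i' _
        have := hAB ht₀ (j.succAbove i') (mem_univ _)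
        simpa using this
      rw [hFeq, Set.Icc_add_Icc hinf_le hε, Real.volume_Icc, Real.volume_Icc,
        indicator_of_mem hωbox]
      rw [← ENNReal.ofReal_add (by linarith) hε]
      exact ENNReal.ofReal_le_ofReal (by ring_nf; linarith)
  calc volume A' = ∫⁻ ω : Fin m → ℝ, volume {t : ℝ | j.insertNth t ω ∈ A'} := key A' hA'm
    _ ≤ ∫⁻ ω : Fin m → ℝ, (volume {t : ℝ | j.insertNth t ω ∈ A}
          + boxm.indicator (fun _ => ENNReal.ofReal ε) ω) := lintegral_mono hfib
    _ = (∫⁻ ω : Fin m → ℝ, volume {t : ℝ | j.insertNth t ω ∈ A})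
          + ∫⁻ ω : Fin m → ℝ, boxm.indicator (fun _ => ENNReal.ofReal ε) ω := by
        rw [lintegral_add_right]
        exact measurable_const.indicator (MeasurableSet.univ_pi fun _ => measurableSet_Icc)
    _ = volume A + ENNReal.ofReal ε * ENNReal.ofReal (2*B) ^ m := by
        rw [← key A hAm, lintegral_indicator
          (MeasurableSet.univ_pi fun _ => measurableSet_Icc)]
        congr 1
        rw [setLIntegral_const]
        congr 1
        show volume (univ.pi fun _ : Fin m => Icc (-B) B) = _
        rw [volume_pi_pi]
        simp only [Real.volume_Icc, Finset.prod_const, Finset.card_univ, Fintype.card_fin]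
        congr 1
        ring

lemma qset_empty (n ε) : qset n ∅ ε = {0} := by
  ext x
  simp only [qset, Finset.notMem_empty, if_false, mem_pi, mem_univ, forall_true_left,
    mem_singleton_iff]
  constructor
  · intro h; funext i; exact h i
  · intro h i; rw [h]; rfl

lemma qset_insert (n : ℕ) (s : Finset (Fin n)) (j : Fin n) (hj : j ∉ s) (ε : ℝ) :
    qset n (insert j s) ε = qset n s ε + seg n j ε := by
  classical
  ext x
  constructor
  · intro hx
    refine Set.mem_add.2 ⟨Function.update x j 0, ?_, fun i => if i = j then x j else 0, ?_, ?_⟩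
    · intro i _
      by_cases hij : i = j
      · subst hij
        simp [Function.update_self, if_neg hj]
      · have := hx i (mem_univ i)
        by_cases his : i ∈ s
        · simp only [Function.update_of_ne hij, if_pos his]
          simpa [Finset.mem_insert, his] using this
        · have hx0 : x i = 0 := by
            simpa [Finset.mem_insert, hij, his] using hx i (mem_univ i)
          simp only [Function.update_of_ne hij, if_neg his]
          simp [hx0]
    · intro i _
      by_cases hij : i = j
      · subst hij
        have := hx i (mem_univ i)
        simpa [Finset.mem_insert_self] using this
      · simp [hij]
    · funext i
      by_cases hij : i = j
      · subst hij; simp [Function.update_self]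
      · simp [Function.update_of_ne hij, hij]
  · intro hx
    obtain ⟨a, ha, c, hc, hac⟩ := Set.mem_add.1 hx
    intro i _
    by_cases hij : i = j
    · subst hij
      have h1 : a i = 0 := by
        have := ha i (mem_univ i); simpa [if_neg hj] using this
      have h2 : c i ∈ Icc (0:ℝ) ε := by
        have := hc i (mem_univ i); simpa using this
      have : x i = c i := by rw [← hac]; simp [Pi.add_apply, h1]
      simp only [Finset.mem_insert_self, if_pos]
      rw [this]; exact h2
    · have h2 : c i = 0 := by
        have := hc i (mem_univ i); simpa [hij] using this
      have hxa : x i = a i := by rw [← hac]; simp [Pi.add_apply, h2]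
      by_cases his : i ∈ s
      · have := ha i (mem_univ i)
        have hmem : i ∈ insert j s := Finset.mem_insert_of_mem his
        simp only [if_pos hmem]
        rw [hxa]
        simpa [if_pos his] using this
      · have := ha i (mem_univ i)
        have hmem : i ∉ insert j s := by simp [hij, his]
        simp only [if_neg hmem]
        rw [hxa]
        simpa [if_neg his] using this

lemma fatten (m : ℕ) (ε B : ℝ) (hε : 0 ≤ ε) (hB : 0 ≤ B)
    (P : Set (Fin (m+1) → ℝ)) (hP : Convex ℝ P) (hPc : IsCompact P)
    (hPB : P ⊆ univ.pi fun _ => Icc (-B) B) (s : Finset (Fin (m+1))) :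
    volume (P + qset (m+1) s ε)
      ≤ volume P + ENNReal.ofReal (s.card * (ε * (2*(B+ε))^m)) := by
  classical
  induction s using Finset.induction_on with
  | empty =>
      rw [qset_empty]
      simp [Set.add_singleton]
  | @insert j s hj ih =>
      have hq : P + qset (m+1) (insert j s) ε = (P + qset (m+1) s ε) + seg (m+1) j ε := by
        rw [qset_insert _ _ _ hj, add_assoc]
      have hsub : (P + qset (m+1) s ε) ⊆ univ.pi fun _ => Icc (-(B+ε)) (B+ε) := by
        rintro x ⟨a, ha, c, hc, rfl⟩
        intro i _
        have h1 := hPB ha i (mem_univ i)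
        have h2 : c i ∈ Icc (0:ℝ) ε := by
          have := hc i (mem_univ i)
          by_cases his : i ∈ s
          · simpa [if_pos his] using this
          · have : c i = 0 := by simpa [if_neg his] using this
            rw [this]; exact ⟨le_refl 0, hε⟩
        simp only [mem_Icc, Pi.add_apply] at h1 h2 ⊢
        constructor <;> [linarith [h1.1, h2.1]; linarith [h1.2, h2.2]]
      have hstep := step m j ε (B+ε) hε (P + qset (m+1) s ε)
        (hP.add (qset_convex _ _ _)) (hPc.add (qset_compact _ _ _)) hsub
      rw [hq]
      calc volume ((P + qset (m+1) s ε) + seg (m+1) j ε)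
          ≤ volume (P + qset (m+1) s ε)
            + ENNReal.ofReal ε * ENNReal.ofReal (2*(B+ε)) ^ m := hstep
        _ ≤ (volume P + ENNReal.ofReal (s.card * (ε * (2*(B+ε))^m)))
            + ENNReal.ofReal ε * ENNReal.ofReal (2*(B+ε)) ^ m := by
            exact add_le_add_left ih _
        _ = volume P + ENNReal.ofReal ((insert j s).card * (ε * (2*(B+ε))^m)) := by
            rw [add_assoc]
            congr 1
            rw [← ENNReal.ofReal_pow (by linarith), ← ENNReal.ofReal_mul hε,
              ← ENNReal.ofReal_add (by positivity) (by positivity)]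
            congr 1
            rw [Finset.card_insert_of_notMem hj]
            push_cast
            ring

/-- the lattice in the pi model -/
def plat (n k : ℕ) : Set (Fin n → ℝ) := {x | ∀ i, ∃ z : ℤ, (k:ℝ) * x i = (z:ℝ)}

lemma plat_finite (n k : ℕ) (hk : 1 ≤ k) (B : ℝ) (P : Set (Fin n → ℝ))
    (hPB : P ⊆ univ.pi fun _ => Icc (-B) B) : (P ∩ plat n k).Finite := by
  classical
  have hk0 : (0:ℝ) < k := by exact_mod_cast hk
  set N : ℤ := ⌈(k:ℝ) * B⌉ with hN
  set f : (Fin n → ℝ) → (Fin n → ℤ) := fun x i => ⌊(k:ℝ) * x i⌋ with hf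
  have himfin : (f '' (P ∩ plat n k)).Finite := by
    apply Set.Finite.subset (Set.Finite.pi fun _ : Fin n => Set.finite_Icc (-N) N)
    rintro g ⟨x, ⟨hxP, hxL⟩, rfl⟩
    intro i _
    obtain ⟨z, hz⟩ := hxL i
    have hxi := hPB hxP i (mem_univ i)
    simp only [mem_Icc] at hxi
    have hz1 : (z:ℝ) ≤ (k:ℝ) * B := by
      rw [← hz]; exact mul_le_mul_of_nonneg_left hxi.2 (le_of_lt hk0)
    have hz2 : -((k:ℝ) * B) ≤ (z:ℝ) := by
      rw [← hz]
      have := mul_le_mul_of_nonneg_left hxi.1 (le_of_lt hk0)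
      linarith [this]
    have hfl : f x i = z := by rw [hf]; simp only; rw [hz, Int.floor_intCast]
    rw [hfl]
    constructor
    · have : -(N:ℝ) ≤ (z:ℝ) := le_trans (by simp [hN]; linarith [Int.le_ceil ((k:ℝ)*B)]) hz2
      exact_mod_cast this
    · have : (z:ℝ) ≤ (N:ℝ) := le_trans hz1 (Int.le_ceil _)
      exact_mod_cast this
  refine Set.Finite.of_finite_image himfin ?_
  rintro x ⟨hxP, hxL⟩ y ⟨hyP, hyL⟩ hxy
  funext i
  obtain ⟨zx, hzx⟩ := hxL i
  obtain ⟨zy, hzy⟩ := hyL i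
  have h1 : f x i = zx := by rw [hf]; simp only; rw [hzx, Int.floor_intCast]
  have h2 : f y i = zy := by rw [hf]; simp only; rw [hzy, Int.floor_intCast]
  have : zx = zy := by rw [← h1, ← h2, hxy]
  have : (k:ℝ) * x i = (k:ℝ) * y i := by rw [hzx, hzy, this]
  exact mul_left_cancel₀ (ne_of_gt hk0) this

lemma count_mul_le (n k : ℕ) (hk : 1 ≤ k) (P : Set (Fin n → ℝ))
    (hfin : (P ∩ plat n k).Finite) :
    (ENNReal.ofReal ((k:ℝ)⁻¹)) ^ n * (P ∩ plat n k).ncard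
      ≤ volume (P + qset n Finset.univ ((k:ℝ)⁻¹)) := by
  classical
  have hk0 : (0:ℝ) < k := by exact_mod_cast hk
  set ε : ℝ := (k:ℝ)⁻¹ with hεdef
  have hε : 0 < ε := inv_pos.2 hk0
  set t := hfin.toFinset with ht
  set cell : (Fin n → ℝ) → Set (Fin n → ℝ) :=
    fun x => univ.pi fun i => Ico (x i) (x i + ε) with hcell
  have hcellvol : ∀ x, volume (cell x) = (ENNReal.ofReal ε) ^ n := by
    intro x
    rw [hcell]
    simp only
    rw [volume_pi_pi]
    simp [Real.volume_Ico]
  have hdist : ∀ x ∈ t, ∀ y ∈ t, x ≠ y → ∃ i, ε ≤ |x i - y i| := by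
    intro x hx y hy hxy
    rw [ht, Set.Finite.mem_toFinset] at hx hy
    have : ∃ i, x i ≠ y i := by
      by_contra h
      push_neg at h
      exact hxy (funext h)
    obtain ⟨i, hne⟩ := this
    obtain ⟨zx, hzx⟩ := hx.2 i
    obtain ⟨zy, hzy⟩ := hy.2 i
    have hzz : zx ≠ zy := by
      intro h
      apply hne
      have : (k:ℝ) * x i = (k:ℝ) * y i := by rw [hzx, hzy, h]
      exact mul_left_cancel₀ (ne_of_gt hk0) this
    have hone : (1:ℝ) ≤ |(zx:ℝ) - (zy:ℝ)| := by
      have := Int.one_le_abs (sub_ne_zero.2 hzz)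
      have h2 : ((1:ℤ):ℝ) ≤ ((|zx - zy|:ℤ):ℝ) := by exact_mod_cast this
      simpa [Int.cast_abs] using h2
    refine ⟨i, ?_⟩
    have hxiyi : x i - y i = ((zx:ℝ) - zy) / k := by
      field_simp
      linear_combination hzx - hzy
    rw [hxiyi, abs_div, abs_of_pos hk0, hεdef]
    refine (le_div_iff₀ hk0).2 ?_
    rw [inv_mul_cancel₀ (ne_of_gt hk0)]
    exact hone
  have hdisj : (↑t : Set (Fin n → ℝ)).PairwiseDisjoint cell := by
    intro x hx y hy hxy
    obtain ⟨i, hi⟩ := hdist x (by exact hx) y (by exact hy) hxy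
    show Disjoint (cell x) (cell y)
    rw [Set.disjoint_left]
    intro p hpx hpy
    have h1 := hpx i (mem_univ i)
    have h2 := hpy i (mem_univ i)
    simp only [hcell, mem_Ico] at h1 h2
    rcases le_total (x i) (y i) with hle | hle
    · have : |x i - y i| = y i - x i := by rw [abs_sub_comm]; exact abs_of_nonneg (by linarith)
      rw [this] at hi
      linarith [h1.2, h2.1]
    · have : |x i - y i| = x i - y i := abs_of_nonneg (by linarith)
      rw [this] at hi
      linarith [h1.1, h2.2]
  have hsub : ∀ x ∈ t, cell x ⊆ P + qset n Finset.univ ε := by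
    intro x hx p hp
    rw [ht, Set.Finite.mem_toFinset] at hx
    refine Set.mem_add.2 ⟨x, hx.1, p - x, ?_, by abel⟩
    intro i _
    have := hp i (mem_univ i)
    simp only [hcell, mem_Ico] at this
    simp only [if_pos (Finset.mem_univ i), Pi.sub_apply, mem_Icc]
    constructor <;> linarith [this.1, this.2]
  have hmeas : ∀ x : Fin n → ℝ, MeasurableSet (cell x) := by
    intro x
    exact MeasurableSet.univ_pi fun i => measurableSet_Ico
  have hunion : volume (⋃ x ∈ t, cell x) = t.card * (ENNReal.ofReal ε) ^ n := by
    rw [measure_biUnion_finset hdisj fun x _ => hmeas x]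
    simp_rw [hcellvol]
    rw [Finset.sum_const, nsmul_eq_mul]
  have hcard : (P ∩ plat n k).ncard = t.card := by
    rw [ht, Set.ncard_eq_toFinset_card _ hfin]
  rw [hcard, mul_comm, ← hunion]
  exact measure_mono (Set.iUnion₂_subset hsub)

lemma pi_main (m k : ℕ) (hk : 1 ≤ k) (B : ℝ) (hB : 0 ≤ B) (P : Set (Fin (m+1) → ℝ))
    (hP : Convex ℝ P) (hPc : IsCompact P)
    (hPB : P ⊆ univ.pi fun _ => Icc (-B) B) :
    ((P ∩ plat (m+1) k).ncard : ℝ)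
      ≤ (volume P).toReal * (k:ℝ)^(m+1) + ((m+1) * (2*(B+1))^m) * (k:ℝ)^m := by
  classical
  have hk0 : (0:ℝ) < k := by exact_mod_cast hk
  have hk1 : (1:ℝ) ≤ k := by exact_mod_cast hk
  set ε : ℝ := (k:ℝ)⁻¹ with hεdef
  have hε : 0 < ε := inv_pos.2 hk0
  have hε1 : ε ≤ 1 := by
    rw [hεdef]
    rw [inv_le_one_iff₀]
    right; exact hk1
  have hfin := plat_finite (m+1) k hk B P hPB
  have h1 := count_mul_le (m+1) k hk P hfin
  have h2 := fatten m ε B (le_of_lt hε) hB P hP hPc hPB Finset.univ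
  have hcardu : (Finset.univ : Finset (Fin (m+1))).card = m + 1 := by
    rw [Finset.card_univ, Fintype.card_fin]
  rw [hcardu] at h2
  -- volume of P + cube is finite
  have hQc : IsCompact (P + qset (m+1) Finset.univ ε) := hPc.add (qset_compact _ _ _)
  have hQfin : volume (P + qset (m+1) Finset.univ ε) ≠ ⊤ := hQc.measure_lt_top.ne
  have hPfin : volume P ≠ ⊤ := hPc.measure_lt_top.ne
  -- real versions
  set V : ℝ := (volume P).toReal with hV
  set c : ℝ := ((m:ℝ)+1) * (ε * (2*(B+ε))^m) with hc
  have hc0 : 0 ≤ c := by positivity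
  have hr2 : (volume (P + qset (m+1) Finset.univ ε)).toReal ≤ V + c := by
    have hne : volume P + ENNReal.ofReal (((m:ℝ)+1) * (ε * (2*(B+ε))^m)) ≠ ⊤ :=
      ENNReal.add_ne_top.2 ⟨hPfin, ENNReal.ofReal_ne_top⟩
    have := ENNReal.toReal_mono hne (by exact_mod_cast h2)
    rwa [ENNReal.toReal_add hPfin ENNReal.ofReal_ne_top, ENNReal.toReal_ofReal hc0] at this
  have hr1 : ε^(m+1) * ((P ∩ plat (m+1) k).ncard : ℝ)
      ≤ (volume (P + qset (m+1) Finset.univ ε)).toReal := by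
    have := ENNReal.toReal_mono hQfin h1
    rwa [ENNReal.toReal_mul, ENNReal.toReal_pow, ENNReal.toReal_ofReal (le_of_lt hε),
      ENNReal.toReal_natCast] at this
  have hmain : ε^(m+1) * ((P ∩ plat (m+1) k).ncard : ℝ) ≤ V + ε * (((m:ℝ)+1) * (2*(B+1))^m) := by
    refine le_trans (le_trans hr1 hr2) ?_
    have hpow : (2*(B+ε))^m ≤ (2*(B+1))^m := by
      apply pow_le_pow_left₀ (by linarith) (by linarith)
    have : c ≤ ε * (((m:ℝ)+1) * (2*(B+1))^m) := by
      rw [hc]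
      have h3 : ((m:ℝ)+1) * (ε * (2*(B+ε))^m) ≤ ((m:ℝ)+1) * (ε * (2*(B+1))^m) := by
        apply mul_le_mul_of_nonneg_left _ (by positivity)
        exact mul_le_mul_of_nonneg_left hpow (le_of_lt hε)
      linarith [h3]
    linarith
  -- multiply by k^(m+1)
  have hek : ε * (k:ℝ) = 1 := inv_mul_cancel₀ (ne_of_gt hk0)
  have hekn : ε^(m+1) * (k:ℝ)^(m+1) = 1 := by
    rw [← mul_pow, hek, one_pow]
  have hcardeq : ((P ∩ plat (m+1) k).ncard : ℝ)
      = (ε^(m+1) * ((P ∩ plat (m+1) k).ncard : ℝ)) * (k:ℝ)^(m+1) := by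
    rw [mul_comm (ε^(m+1)) _, mul_assoc, hekn, mul_one]
  rw [hcardeq]
  have hstep := mul_le_mul_of_nonneg_right hmain (by positivity : (0:ℝ) ≤ (k:ℝ)^(m+1))
  refine le_trans hstep ?_
  have hkm : ε * (k:ℝ)^(m+1) = (k:ℝ)^m := by
    rw [pow_succ, ← mul_assoc]
    rw [mul_comm ε ((k:ℝ)^m), mul_assoc, hek, mul_one]
  have : (V + ε * (((m:ℝ)+1) * (2*(B+1))^m)) * (k:ℝ)^(m+1)
      = V * (k:ℝ)^(m+1) + (((m:ℝ)+1) * (2*(B+1))^m) * ((ε * (k:ℝ)^(m+1))) := by ring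
  rw [this, hkm]

end Stmt2Aux

open Stmt2Aux in
theorem stmt2 (n : ℕ) (hn : 1 ≤ n) (K : Set (EuclideanSpace ℝ (Fin n)))
    (hKne : K.Nonempty) (hKcp : IsCompact K) (hKcv : Convex ℝ K) :
    ∃ C : ℝ, 0 < C ∧ ∀ P : Set (EuclideanSpace ℝ (Fin n)),
      P ⊆ K → P.Nonempty → IsCompact P → Convex ℝ P →
      ∀ k : ℕ, 1 ≤ k →
        ((P ∩ lpts n k).ncard : ℝ)
          ≤ (volume P).toReal * (k : ℝ) ^ n + C * (k : ℝ) ^ (n - 1) := by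
  classical
  obtain ⟨m, rfl⟩ : ∃ m, n = m + 1 := ⟨n - 1, by omega⟩
  set e := EuclideanSpace.equiv (Fin (m+1)) ℝ with he
  set f : EuclideanSpace ℝ (Fin (m+1)) → (Fin (m+1) → ℝ) := ⇑e with hf
  have hfinj : Function.Injective f := e.injective
  have hfi : ∀ (x : EuclideanSpace ℝ (Fin (m+1))) (i : Fin (m+1)), f x i = x i :=
    fun _ _ => rfl
  -- bound on K
  have hK'c : IsCompact (f '' K) := hKcp.image e.continuous
  obtain ⟨R, hR⟩ := hK'c.isBounded.exists_norm_le
  set B : ℝ := max R 0 with hB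
  have hB0 : 0 ≤ B := le_max_right _ _
  refine ⟨((m:ℝ)+1) * (2*(B+1))^m, by positivity, ?_⟩
  intro P hPK hPne hPcp hPcv k hk
  set P' : Set (Fin (m+1) → ℝ) := f '' P with hP'
  have hP'cv : Convex ℝ P' := hPcv.linear_image (e.toLinearEquiv.toLinearMap)
  have hP'cp : IsCompact P' := hPcp.image e.continuous
  have hP'B : P' ⊆ univ.pi fun _ => Icc (-B) B := by
    rintro y ⟨x, hx, rfl⟩
    intro i _
    have hyK : f x ∈ f '' K := ⟨x, hPK hx, rfl⟩
    have h1 : ‖f x‖ ≤ R := hR _ hyK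
    have h2 : ‖f x i‖ ≤ ‖f x‖ := norm_le_pi_norm (f x) i
    have h3 : |f x i| ≤ B := by
      rw [Real.norm_eq_abs] at h2
      exact le_trans (le_trans h2 h1) (le_max_left _ _)
    simpa [mem_Icc] using abs_le.1 h3
  -- volume equality
  have hvol : volume P' = volume P := by
    have hmp := (EuclideanSpace.volume_preserving_symm_measurableEquiv_toLp (Fin (m+1))).symm
    have himg : P' = (MeasurableEquiv.toLp 2 (Fin (m+1) → ℝ)) ⁻¹' P := by
      rw [hP']
      rw [show f = ⇑(MeasurableEquiv.toLp 2 (Fin (m+1) → ℝ)).symm from rfl]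
      exact MeasurableEquiv.image_eq_preimage_symm _ _
    rw [himg]
    exact hmp.measure_preimage hPcp.measurableSet.nullMeasurableSet
  -- lattice point count equality
  have hlat : f '' (P ∩ lpts (m+1) k) = P' ∩ plat (m+1) k := by
    ext y
    constructor
    · rintro ⟨x, ⟨hxP, hxL⟩, rfl⟩
      exact ⟨⟨x, hxP, rfl⟩, fun i => by rw [hfi]; exact hxL i⟩
    · rintro ⟨⟨x, hxP, rfl⟩, hyL⟩
      exact ⟨x, ⟨hxP, fun i => by have := hyL i; rwa [hfi] at this⟩, rfl⟩
  have hcard : (P ∩ lpts (m+1) k).ncard = (P' ∩ plat (m+1) k).ncard := by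
    rw [← hlat, Set.ncard_image_of_injective _ hfinj]
  have := pi_main m k hk B hB0 P' hP'cv hP'cp hP'B
  rw [hvol] at this
  rw [hcard]
  simpa using this
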